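/- arXiv:1108.5488 — 6 statements merged into one kernel-verified Lean document; each statement's English description precedes it below -/
import Mathlib

section
/- Let (Ω,ℱ,P) be a probability space, 𝒟 a sub-σ-field, D ∈ 𝒟 an event, and ξ, η integrable random variables with E[η] = 0, η independent of 𝒟, and ξ and η conditionally independent given 𝒟. Then E[ξ ∨ (η·1_D)] ≤ E[ξ ∨ η], where ∨ denotes maximum. -/
open MeasureTheory ProbabilityTheory

/-- Transfer a `μ`-a.e. equality to an a.e. equality for `condexpKernel`. -/
lemma ae_condexpKernel_ae_eq {Ω : Type*} {m : MeasurableSpace Ω} [mΩ : MeasurableSpace Ω]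
    [StandardBorelSpace Ω] [Nonempty Ω] {μ : Measure Ω} [IsFiniteMeasure μ] (hm : m ≤ mΩ)
    {f g : Ω → ℝ} (hfg : f =ᵐ[μ] g) :
    ∀ᵐ ω ∂(μ.trim hm), f =ᵐ[condExpKernel μ m ω] g := by
  obtain ⟨N, hsub, hNmeas, hNnull⟩ :=
    exists_measurable_superset_of_null (ae_iff.mp hfg)
  have h1 : (fun ω => (condExpKernel μ m ω N).toReal) =ᵐ[μ] μ⟦N | m⟧ :=
    condExpKernel_ae_eq_condExp hm hNmeas
  have h0 : (μ⟦N | m⟧) =ᵐ[μ] 0 := by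
    have hind : (N.indicator (fun _ => (1:ℝ))) =ᵐ[μ] 0 := by
      filter_upwards [measure_eq_zero_iff_ae_notMem.mp hNnull] with ω hω
      simp [Set.indicator_of_notMem hω]
    calc (μ⟦N | m⟧) =ᵐ[μ] μ[(0 : Ω → ℝ) | m] := condExp_congr_ae hind
    _ = 0 := condExp_zero
  have hz : ∀ᵐ ω ∂μ, condExpKernel μ m ω N = 0 := by
    filter_upwards [h1, h0] with ω h1ω h0ω
    have ht : (condExpKernel μ m ω N).toReal = 0 := by
      rw [h1ω, h0ω]; rfl
    rcases (ENNReal.toReal_eq_zero_iff _).mp ht with h | h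
    · exact h
    · exact absurd h (measure_ne_top _ _)
  have hzt : ∀ᵐ ω ∂(μ.trim hm), condExpKernel μ m ω N = 0 := by
    rw [ae_iff] at hz ⊢
    have hmeas : MeasurableSet[m] {ω | ¬ condExpKernel μ m ω N = 0} := by
      have h := measurable_condExpKernel (μ := μ) (m := m) hNmeas
      exact (h (MeasurableSet.singleton 0)).compl
    rwa [trim_measurableSet_eq hm hmeas]
  filter_upwards [hzt] with ω hω
  exact ae_iff.mpr (measure_mono_null hsub hω)

/-- The main estimate, for measurable `ξ`, `η`. -/
theorem stmt3_aux {Ω : Type*} {m : MeasurableSpace Ω} [mΩ : MeasurableSpace Ω]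
    [StandardBorelSpace Ω] [Nonempty Ω]
    {μ : Measure Ω} [IsProbabilityMeasure μ] (hm : m ≤ mΩ)
    {D : Set Ω} (hD : MeasurableSet[m] D)
    {ξ η : Ω → ℝ} (hξm : Measurable ξ) (hηm : Measurable η)
    (hξ : Integrable ξ μ) (hη : Integrable η μ)
    (hmean : ∫ ω, η ω ∂μ = 0)
    (hindep : Indep (MeasurableSpace.comap η (inferInstance : MeasurableSpace ℝ)) m μ)
    (hci : CondIndepFun m hm ξ η μ) :
    ∫ ω, max (ξ ω) (η ω * Set.indicator D (fun _ => (1 : ℝ)) ω) ∂μ ≤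
      ∫ ω, max (ξ ω) (η ω) ∂μ := by
  classical
  set B : Set Ω := Dᶜ with hBdef
  have hBm : MeasurableSet[m] B := hD.compl
  have hB : MeasurableSet B := hm _ hBm
  set A : Set Ω := B ∩ ξ ⁻¹' (Set.Iio 0) with hAdef
  have hA : MeasurableSet A := hB.inter (hξm measurableSet_Iio)
  -- conditional expectation of preimages of η is constant
  have hconst : ∀ t : Set ℝ, MeasurableSet t →
      (μ⟦η ⁻¹' t | m⟧) =ᵐ[μ] fun _ => (μ (η ⁻¹' t)).toReal := by
    intro t ht
    have hsm : StronglyMeasurable[MeasurableSpace.comap η (inferInstance : MeasurableSpace ℝ)]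
        ((η ⁻¹' t).indicator fun _ => (1:ℝ)) :=
      (stronglyMeasurable_const).indicator ⟨t, ht, rfl⟩
    have h := condExp_indep_eq (μ := μ) hηm.comap_le hm hsm hindep
    have hval : (μ[(η ⁻¹' t).indicator fun _ => (1:ℝ)]) = (μ (η ⁻¹' t)).toReal :=
      integral_indicator_one (hηm ht)
    rw [hval] at h
    exact h
  -- product rule for conditional expectations
  have hprod := (condIndepFun_iff_condExp_inter_preimage_eq_mul hξm hηm).mp hci
  -- key independence identity
  have key : ∀ t : Set ℝ, MeasurableSet t →
      μ (η ⁻¹' t ∩ A) = μ (η ⁻¹' t) * μ A := by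
    intro t ht
    set s : Set ℝ := Set.Iio 0 with hsdef
    have hs : MeasurableSet s := measurableSet_Iio
    set T : Set Ω := ξ ⁻¹' s ∩ η ⁻¹' t with hTdef
    have hT : MeasurableSet T := (hξm hs).inter (hηm ht)
    have hTint : Integrable (T.indicator fun _ => (1:ℝ)) μ :=
      (integrable_const (1:ℝ)).indicator hT
    have e1 : ∫ ω in B, (μ⟦T | m⟧) ω ∂μ = (μ (T ∩ B)).toReal := by
      rw [setIntegral_condExp hm hTint hBm, setIntegral_indicator hT, setIntegral_const,
        smul_eq_mul, mul_one, Set.inter_comm, measureReal_def]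
    have e2 : ∫ ω in B, (μ⟦T | m⟧) ω ∂μ
        = (∫ ω in B, (μ⟦ξ ⁻¹' s | m⟧) ω ∂μ) * (μ (η ⁻¹' t)).toReal := by
      rw [← integral_mul_const]
      refine setIntegral_congr_ae hB ?_
      filter_upwards [hprod s t hs ht, hconst t ht] with ω h1 h2 _
      rw [h1, h2]
    have e3 : ∫ ω in B, (μ⟦ξ ⁻¹' s | m⟧) ω ∂μ = (μ (ξ ⁻¹' s ∩ B)).toReal := by
      have hint : Integrable ((ξ ⁻¹' s).indicator fun _ => (1:ℝ)) μ :=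
        (integrable_const (1:ℝ)).indicator (hξm hs)
      rw [setIntegral_condExp hm hint hBm, setIntegral_indicator (hξm hs), setIntegral_const,
        smul_eq_mul, mul_one, Set.inter_comm, measureReal_def]
    have e4 : (μ (T ∩ B)).toReal = (μ (ξ ⁻¹' s ∩ B)).toReal * (μ (η ⁻¹' t)).toReal := by
      rw [← e1, e2, e3]
    have hset1 : η ⁻¹' t ∩ A = T ∩ B := by
      rw [hAdef, hTdef]; ext ω
      simp only [Set.mem_inter_iff, Set.mem_preimage]
      tauto
    have hset2 : A = ξ ⁻¹' s ∩ B := by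
      rw [hAdef]; ext ω
      simp only [Set.mem_inter_iff, Set.mem_preimage]
      tauto
    rw [hset1, hset2]
    have h5 : (μ (T ∩ B)).toReal = (μ (η ⁻¹' t) * μ (ξ ⁻¹' s ∩ B)).toReal := by
      rw [ENNReal.toReal_mul, e4, mul_comm]
    exact (ENNReal.toReal_eq_toReal_iff' (measure_ne_top _ _)
      (ENNReal.mul_ne_top (measure_ne_top _ _) (measure_ne_top _ _))).mp h5
  -- the indicator of A is independent of η
  set χ : Ω → ℝ := A.indicator (fun _ => (1:ℝ)) with hχdef
  have hIF : IndepFun η χ μ := by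
    rw [indepFun_iff_measure_inter_preimage_eq_mul]
    intro u t hu ht
    rw [hχdef, Set.indicator_const_preimage_eq_union A t (1:ℝ)]
    by_cases h1 : (1:ℝ) ∈ t <;> by_cases h0 : (0:ℝ) ∈ t <;>
      simp only [h1, h0, if_true, if_false]
    · simp
    · simp only [Set.union_empty]
      exact key u hu
    · simp only [Set.empty_union]
      have hsplit : μ (η ⁻¹' u ∩ A) + μ (η ⁻¹' u ∩ Aᶜ) = μ (η ⁻¹' u) := by
        rw [← Set.diff_eq]
        exact measure_inter_add_diff _ hA
      have h6 : μ (η ⁻¹' u ∩ Aᶜ) = μ (η ⁻¹' u) - μ (η ⁻¹' u) * μ A := by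
        rw [← key u hu, ← hsplit, ENNReal.add_sub_cancel_left (measure_ne_top _ _)]
      rw [h6, prob_compl_eq_one_sub hA,
        ENNReal.mul_sub (fun _ _ => measure_ne_top _ _), mul_one]
    · simp
  have hχint : Integrable χ μ := (integrable_const (1:ℝ)).indicator hA
  -- the key integral vanishes
  have hkey0 : ∫ ω, A.indicator η ω ∂μ = 0 := by
    have h1 : ∀ ω, A.indicator η ω = η ω * χ ω := by
      intro ω
      rw [hχdef]
      by_cases hωA : ω ∈ A
      · simp [Set.indicator_of_mem hωA]
      · simp [Set.indicator_of_notMem hωA]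
    simp_rw [h1]
    have h2 : ∫ ω, η ω * χ ω ∂μ = (∫ ω, η ω ∂μ) * ∫ ω, χ ω ∂μ :=
      hIF.integral_mul_eq_mul_integral hη.1 hχint.1
    rw [h2, hmean, zero_mul]
  -- pointwise inequality
  have hptwise : ∀ ω,
      max (ξ ω) (η ω * Set.indicator D (fun _ => (1 : ℝ)) ω) + A.indicator η ω
        ≤ max (ξ ω) (η ω) := by
    intro ω
    by_cases hωD : ω ∈ D
    · have hωA : ω ∉ A := fun h => h.1 hωD
      simp [Set.indicator_of_mem hωD, Set.indicator_of_notMem hωA]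
    · rw [Set.indicator_of_notMem hωD, mul_zero]
      by_cases hξ0 : ξ ω < 0
      · have hωA : ω ∈ A := ⟨hωD, hξ0⟩
        rw [Set.indicator_of_mem hωA, max_eq_right hξ0.le, zero_add]
        exact le_max_right _ _
      · have hωA : ω ∉ A := fun h => hξ0 h.2
        rw [Set.indicator_of_notMem hωA, add_zero, max_eq_left (not_lt.mp hξ0)]
        exact le_max_left _ _
  -- integrability
  have hint1 : Integrable (fun ω => max (ξ ω) (η ω * Set.indicator D (fun _ => (1 : ℝ)) ω)) μ := by
    have hD' : MeasurableSet D := hm _ hD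
    have hηD : Integrable (fun ω => η ω * Set.indicator D (fun _ => (1 : ℝ)) ω) μ := by
      have heq : (fun ω => η ω * Set.indicator D (fun _ => (1 : ℝ)) ω) = D.indicator η := by
        funext ω
        by_cases hωD : ω ∈ D <;>
          simp [Set.indicator_of_mem, Set.indicator_of_notMem, hωD]
      rw [heq]
      exact hη.indicator hD'
    exact hξ.sup hηD
  have hintA : Integrable (A.indicator η) μ := hη.indicator hA
  have hint2 : Integrable (fun ω => max (ξ ω) (η ω)) μ := hξ.sup hη
  calc ∫ ω, max (ξ ω) (η ω * Set.indicator D (fun _ => (1 : ℝ)) ω) ∂μ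
      = ∫ ω, (max (ξ ω) (η ω * Set.indicator D (fun _ => (1 : ℝ)) ω) + A.indicator η ω) ∂μ := by
        rw [integral_add hint1 hintA, hkey0, add_zero]
    _ ≤ ∫ ω, max (ξ ω) (η ω) ∂μ :=
        integral_mono (hint1.add hintA) hint2 hptwise

/-- If `η` has mean zero, is independent of the sub-σ-field `m`, and `ξ` and `η` are
conditionally independent given `m`, then for `D ∈ m`,
`E[ξ ∨ (η·1_D)] ≤ E[ξ ∨ η]`. -/
theorem stmt3 {Ω : Type*} [mΩ : MeasurableSpace Ω] [StandardBorelSpace Ω] [Nonempty Ω]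
    (μ : Measure Ω) [IsProbabilityMeasure μ]
    (m : MeasurableSpace Ω) (hm : m ≤ mΩ)
    (D : Set Ω) (hD : MeasurableSet[m] D)
    (ξ η : Ω → ℝ) (hξ : Integrable ξ μ) (hη : Integrable η μ)
    (hmean : ∫ ω, η ω ∂μ = 0)
    (hindep : Indep (MeasurableSpace.comap η (inferInstance : MeasurableSpace ℝ)) m μ)
    (hci : CondIndepFun m hm ξ η μ) :
    ∫ ω, max (ξ ω) (η ω * Set.indicator D (fun _ => (1 : ℝ)) ω) ∂μ ≤
      ∫ ω, max (ξ ω) (η ω) ∂μ := by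
  classical
  set ξ' := hξ.1.mk ξ with hξ'def
  set η' := hη.1.mk η with hη'def
  have hξ'meas : Measurable[mΩ] ξ' := hξ.1.stronglyMeasurable_mk.measurable
  have hη'meas : Measurable[mΩ] η' := hη.1.stronglyMeasurable_mk.measurable
  have hξeq : ξ =ᵐ[μ] ξ' := hξ.1.ae_eq_mk
  have hηeq : η =ᵐ[μ] η' := hη.1.ae_eq_mk
  have hξ'int : Integrable ξ' μ := hξ.congr hξeq
  have hη'int : Integrable η' μ := hη.congr hηeq
  have hmean' : ∫ ω, η' ω ∂μ = 0 := by
    rw [← integral_congr_ae hηeq]; exact hmean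
  -- transfer conditional independence to the measurable modifications
  have hci' : CondIndepFun m hm ξ' η' μ :=
    Kernel.IndepFun.congr' hci (ae_condexpKernel_ae_eq (mΩ := mΩ) hm hξeq)
      (ae_condexpKernel_ae_eq (mΩ := mΩ) hm hηeq)
  -- transfer independence to the measurable modification
  have hindep' : Indep (MeasurableSpace.comap η' (inferInstance : MeasurableSpace ℝ)) m μ := by
    rw [Indep_iff] at hindep ⊢
    rintro _ t2 ⟨u, hu, rfl⟩ ht2
    have h1 : η ⁻¹' u =ᵐ[μ] η' ⁻¹' u := hηeq.fun_comp u
    rw [← measure_congr h1, ← measure_congr (h1.inter (Filter.EventuallyEq.refl (ae μ) t2))]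
    exact hindep _ t2 ⟨u, hu, rfl⟩ ht2
  have hmain := stmt3_aux (mΩ := mΩ) hm hD hξ'meas hη'meas hξ'int hη'int hmean' hindep' hci'
  have hL : ∫ ω, max (ξ ω) (η ω * Set.indicator D (fun _ => (1 : ℝ)) ω) ∂μ
      = ∫ ω, max (ξ' ω) (η' ω * Set.indicator D (fun _ => (1 : ℝ)) ω) ∂μ := by
    refine integral_congr_ae ?_
    filter_upwards [hξeq, hηeq] with ω h1 h2
    rw [h1, h2]
  have hR : ∫ ω, max (ξ' ω) (η' ω) ∂μ = ∫ ω, max (ξ ω) (η ω) ∂μ := by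
    refine integral_congr_ae ?_
    filter_upwards [hξeq, hηeq] with ω h1 h2
    rw [h1, h2]
  rw [hL, ← hR]
  exact hmain
end

section
/- Let X ~ N(0, σ²) be a Gaussian random variable independent of an arbitrary integrable random variable Y. Then E[max(X,Y)] is a nondecreasing (in fact increasing) function of σ > 0. -/
open MeasureTheory ProbabilityTheory NNReal Real
lemma aux_abs_max (a b : ℝ) : |max a b| ≤ |a| + |b| := by
  rcases le_total a b with h | h
  · rw [max_eq_right h]; have := abs_nonneg a; linarith
  · rw [max_eq_left h]; have := abs_nonneg b; linarith

lemma aux_two_max (y : ℝ) : max y 0 + max y 0 = y + |y| := by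
  rcases le_total y 0 with h | h
  · rw [max_eq_right h, abs_of_nonpos h]; ring
  · rw [max_eq_left h, abs_of_nonneg h]

lemma aux_ident (x y : ℝ) : max x y + max (-x) y = max (|x| + y) (y + |y|) := by
  rcases abs_cases x with ⟨hx1, hx2⟩ | ⟨hx1, hx2⟩ <;>
    rcases abs_cases y with ⟨hy1, hy2⟩ | ⟨hy1, hy2⟩ <;>
      rw [hx1, hy1] <;> rw [max_def, max_def, max_def] <;> split_ifs <;> linarith

lemma aux_k_le {x x' : ℝ} (h : |x| ≤ |x'|) (y : ℝ) :
    max x y + max (-x) y ≤ max x' y + max (-x') y := by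
  rw [aux_ident, aux_ident]
  exact max_le_max (by linarith) le_rfl

lemma aux_k_lt {x x' y : ℝ} (hy : |y| < |x|) (h : |x| < |x'|) :
    max x y + max (-x) y < max x' y + max (-x') y := by
  rw [aux_ident, aux_ident, max_eq_left (by linarith), max_eq_left (by linarith)]
  linarith

lemma aux_lip {ν : Measure ℝ} [IsProbabilityMeasure ν] {f : ℝ → ℝ → ℝ}
    (hf : ∀ a, Integrable (f a) ν)
    (h : ∀ a b y, |f a y - f b y| ≤ |a - b|) :
    LipschitzWith 1 (fun a => ∫ y, f a y ∂ν) := by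
  rw [lipschitzWith_iff_dist_le_mul]
  intro a b
  rw [Real.dist_eq, Real.dist_eq, NNReal.coe_one, one_mul, ← integral_sub (hf a) (hf b)]
  calc |∫ y, (f a y - f b y) ∂ν| ≤ ∫ y, |f a y - f b y| ∂ν := by
        simpa [Real.norm_eq_abs] using
          norm_integral_le_integral_norm (μ := ν) (fun y => f a y - f b y)
    _ ≤ ∫ _y, |a - b| ∂ν :=
        integral_mono ((hf a).sub (hf b)).abs (integrable_const _) (fun y => h a b y)
    _ = |a - b| := by simp

lemma aux_strict {μ : Measure ℝ} {f₁ f₂ : ℝ → ℝ} (h₁ : Integrable f₁ μ)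
    (h₂ : Integrable f₂ μ) (hle : ∀ x, f₁ x ≤ f₂ x) {s : Set ℝ}
    (hs : ∀ x ∈ s, f₁ x < f₂ x) (hμs : 0 < μ s) :
    ∫ x, f₁ x ∂μ < ∫ x, f₂ x ∂μ := by
  have hd : Integrable (fun x => f₂ x - f₁ x) μ := h₂.sub h₁
  have hpos : 0 < ∫ x, (f₂ x - f₁ x) ∂μ := by
    rw [integral_pos_iff_support_of_nonneg (fun x => sub_nonneg.2 (hle x)) hd]
    exact hμs.trans_le (measure_mono fun x hx => (sub_pos.2 (hs x hx)).ne')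
  rw [integral_sub h₂ h₁] at hpos; linarith

lemma aux_int_id {v : ℝ≥0} (hv : v ≠ 0) : Integrable (fun x => x) (gaussianReal 0 v) := by
  rw [gaussianReal_of_var_ne_zero 0 hv,
    integrable_withDensity_iff (measurable_gaussianPDF 0 v)
      (ae_of_all _ fun x => ENNReal.ofReal_lt_top)]
  have hv' : (0:ℝ) < v := lt_of_le_of_ne (v.coe_nonneg) (by exact_mod_cast (Ne.symm hv))
  have hb : (0:ℝ) < (2 * (v:ℝ))⁻¹ := by positivity
  have h := (integrable_rpow_mul_exp_neg_mul_sq hb (s := 1) (by norm_num)).const_mul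
    ((Real.sqrt (2 * π * v))⁻¹)
  refine h.congr (ae_of_all _ fun x => ?_)
  simp only [gaussianPDF_def, ENNReal.toReal_ofReal (gaussianPDFReal_nonneg 0 v x)]
  simp only [gaussianPDFReal_def, Real.rpow_one, sub_zero,
    show -x ^ 2 / (2 * (v:ℝ)) = -(2 * (v:ℝ))⁻¹ * x ^ 2 by field_simp]
  ring

/-- For `X ~ N(0,σ²)` independent of an integrable `Y`, `E[max(X,Y)]` is an
increasing function of `σ > 0`. -/
theorem stmt4 (ν : Measure ℝ) [IsProbabilityMeasure ν]
    (hY : Integrable (fun y : ℝ => y) ν)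
    (σ₁ σ₂ : ℝ≥0) (h1 : 0 < σ₁) (h12 : σ₁ < σ₂) :
    ∫ p : ℝ × ℝ, max p.1 p.2 ∂((gaussianReal 0 (σ₁ ^ 2)).prod ν) <
      ∫ p : ℝ × ℝ, max p.1 p.2 ∂((gaussianReal 0 (σ₂ ^ 2)).prod ν) := by
  have hσ₁ : (0:ℝ) < σ₁ := h1
  have hσ₂ : (0:ℝ) < σ₂ := lt_trans h1 h12
  have hv₁ : (σ₁ ^ 2 : ℝ≥0) ≠ 0 := pow_ne_zero _ h1.ne'
  have hv₂ : (σ₂ ^ 2 : ℝ≥0) ≠ 0 := pow_ne_zero _ (h1.trans h12).ne'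
  set μ₁ := gaussianReal 0 (σ₁ ^ 2) with hμ₁def
  set μ₂ := gaussianReal 0 (σ₂ ^ 2) with hμ₂def
  set c : ℝ := (σ₂ : ℝ) / σ₁ with hcdef
  have hc : 1 < c := (one_lt_div hσ₁).mpr (by exact_mod_cast h12)
  have hc0 : 0 < c := zero_lt_one.trans hc
  -- scaling map
  have hmap : μ₁.map (fun x => c * x) = μ₂ := by
    have h := gaussianReal_map_const_mul (μ := 0) (v := σ₁ ^ 2) c
    rw [mul_zero] at h
    rw [hμ₁def, hμ₂def, h]
    congr 1
    rw [← NNReal.coe_inj]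
    rw [NNReal.coe_mul, NNReal.coe_pow, NNReal.coe_pow, NNReal.coe_mk, hcdef]
    field_simp
  -- symmetry of the Gaussian
  have hneg : μ₁.map (fun x => -x) = μ₁ := by
    have h := gaussianReal_map_const_mul (μ := 0) (v := σ₁ ^ 2) (-1)
    rw [show ((-1 : ℝ) * ·) = (fun x : ℝ => -x) from funext fun x => by ring] at h
    rw [mul_zero] at h
    rw [hμ₁def, h]
    congr 1
    rw [← NNReal.coe_inj]
    push_cast
    norm_num
  have hinv : ∀ h : ℝ → ℝ, Continuous h → ∫ x, h (-x) ∂μ₁ = ∫ x, h x ∂μ₁ := by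
    intro h hh
    conv_rhs => rw [← hneg]
    rw [integral_map measurable_neg.aemeasurable hh.aestronglyMeasurable]
  -- basic integrabilities
  have hId₁ : Integrable (fun x => x) μ₁ := aux_int_id hv₁
  have hId₂ : Integrable (fun x => x) μ₂ := aux_int_id hv₂
  have hgy : ∀ x : ℝ, Integrable (fun y => max x y) ν := by
    intro x
    refine Integrable.mono' ((integrable_const |x|).add hY.abs)
      (continuous_const.max continuous_id).aestronglyMeasurable
      (ae_of_all _ fun y => ?_)
    simpa [Real.norm_eq_abs] using aux_abs_max x y
  set g : ℝ → ℝ := fun x => ∫ y, max x y ∂ν with hgdef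
  have hglip : LipschitzWith 1 g :=
    aux_lip hgy (fun a b y => abs_max_sub_max_le_abs a b y)
  have hgcont : Continuous g := hglip.continuous
  have hgb : ∀ x : ℝ, |g x| ≤ |g 0| + |x| := by
    intro x
    have := hglip.dist_le_mul x 0
    rw [Real.dist_eq, Real.dist_eq, NNReal.coe_one, one_mul, sub_zero] at this
    calc |g x| ≤ |g 0| + |g x - g 0| := by
          have := abs_sub_abs_le_abs_sub (g x) (g 0); linarith [abs_abs (g x)]
      _ ≤ |g 0| + |x| := by linarith
  -- integrability of x ↦ g (a * x) with respect to μ₁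
  have hIg : ∀ a : ℝ, Integrable (fun x => g (a * x)) μ₁ := by
    intro a
    refine Integrable.mono' ((integrable_const (|g 0|)).add ((hId₁.abs.const_mul |a|)))
      (hgcont.comp (continuous_const.mul continuous_id)).aestronglyMeasurable
      (ae_of_all _ fun x => ?_)
    have h2 := hgb (a * x)
    simp only [Real.norm_eq_abs] at *
    calc |g (a * x)| ≤ |g 0| + |a * x| := h2
      _ = |g 0| + |a| * |x| := by rw [abs_mul]
  -- integrability of max on the product measures
  have hPInt : ∀ μ : Measure ℝ, IsProbabilityMeasure μ → Integrable (fun x => x) μ →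
      Integrable (fun p : ℝ × ℝ => max p.1 p.2) (μ.prod ν) := by
    intro μ hμ hint
    have hmeas : AEStronglyMeasurable (fun p : ℝ × ℝ => max p.1 p.2) (μ.prod ν) :=
      (continuous_fst.max continuous_snd).aestronglyMeasurable
    rw [integrable_prod_iff hmeas]
    refine ⟨ae_of_all _ fun x => hgy x, ?_⟩
    have habs : ∀ x : ℝ, Integrable (fun y => |max x y|) ν := fun x => (hgy x).abs
    have hlip2 : LipschitzWith 1 (fun x => ∫ y, |max x y| ∂ν) :=
      aux_lip habs (fun a b y =>
        (abs_abs_sub_abs_le_abs_sub _ _).trans (abs_max_sub_max_le_abs a b y))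
    refine Integrable.mono' ((integrable_const (∫ y, |y| ∂ν)).add hint.abs)
      ((by simpa [Real.norm_eq_abs] using hlip2.continuous.aestronglyMeasurable :
        AEStronglyMeasurable (fun x => ∫ y, ‖max x y‖ ∂ν) μ))
      (ae_of_all _ fun x => ?_)
    simp only [Real.norm_eq_abs]
    rw [abs_of_nonneg (integral_nonneg fun y => abs_nonneg _)]
    calc ∫ y, |max x y| ∂ν ≤ ∫ y, (|x| + |y|) ∂ν :=
          integral_mono (habs x) ((integrable_const _).add hY.abs)
            (fun y => aux_abs_max x y)
      _ = |x| + ∫ y, |y| ∂ν := by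
          rw [integral_add (integrable_const _) hY.abs, integral_const]
          simp
      _ = ∫ y, |y| ∂ν + |x| := by ring
  have hP₁ := hPInt μ₁ inferInstance hId₁
  have hP₂ := hPInt μ₂ inferInstance hId₂
  -- reduce to one-dimensional integrals of g
  rw [MeasureTheory.integral_prod _ hP₁, MeasureTheory.integral_prod _ hP₂]
  have hmapg : ∫ x, g x ∂μ₂ = ∫ x, g (c * x) ∂μ₁ := by
    rw [← hmap, integral_map (Measurable.aemeasurable (by fun_prop : Measurable (fun x : ℝ => c * x)))
      hgcont.aestronglyMeasurable]
  show ∫ x, g x ∂μ₁ < ∫ x, g x ∂μ₂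
  rw [hmapg]
  -- choose M with positive ν-mass below it
  obtain ⟨n, hn⟩ : ∃ n : ℕ, ν {y | |y| < (n : ℝ)} ≠ 0 := by
    by_contra hcon
    push_neg at hcon
    have huniv : (Set.univ : Set ℝ) ⊆ ⋃ n : ℕ, {y | |y| < (n : ℝ)} := by
      intro y _
      obtain ⟨n, hn⟩ := exists_nat_gt |y|
      exact Set.mem_iUnion.2 ⟨n, hn⟩
    have : ν (Set.univ : Set ℝ) = 0 :=
      measure_mono_null huniv (measure_iUnion_null fun n => hcon n)
    simp [measure_univ] at this
  set M : ℝ := (n : ℝ) + 1 with hMdef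
  have hM1 : (1:ℝ) ≤ M := le_add_of_nonneg_left (Nat.cast_nonneg n)
  -- the two symmetrized integrands
  have hadd : ∀ a x : ℝ, g (a * x) + g (-(a * x)) = ∫ y, (max (a*x) y + max (-(a*x)) y) ∂ν := by
    intro a x
    rw [integral_add (hgy (a*x)) (hgy (-(a*x)))]
  -- pointwise inequality between symmetrized integrands
  have hle : ∀ x : ℝ, g x + g (-x) ≤ g (c * x) + g (-(c * x)) := by
    intro x
    have h1 := hadd 1 x
    simp only [one_mul] at h1
    rw [h1, hadd c x]
    refine integral_mono ((hgy x).add (hgy (-x))) ((hgy (c*x)).add (hgy (-(c*x)))) fun y => ?_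
    refine aux_k_le ?_ y
    rw [abs_mul, abs_of_pos hc0]
    nlinarith [abs_nonneg x]
  have hlt : ∀ x : ℝ, M ≤ |x| → g x + g (-x) < g (c * x) + g (-(c * x)) := by
    intro x hx
    have hxpos : (0:ℝ) < |x| := lt_of_lt_of_le (by linarith) hx
    have h1 := hadd 1 x
    simp only [one_mul] at h1
    rw [h1, hadd c x]
    refine aux_strict ((hgy x).add (hgy (-x))) ((hgy (c*x)).add (hgy (-(c*x))))
      (fun y => aux_k_le (by rw [abs_mul, abs_of_pos hc0]; nlinarith [abs_nonneg x]) y)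
      (s := {y | |y| < (n : ℝ)}) (fun y hy => ?_) ?_
    · refine aux_k_lt (lt_of_lt_of_le (lt_of_lt_of_le hy (by linarith)) hx) ?_
      rw [abs_mul, abs_of_pos hc0]
      nlinarith
    · exact pos_iff_ne_zero.mpr hn
  -- positivity of the strict-inequality region
  have hSpos : 0 < μ₁ {x : ℝ | M ≤ |x|} := by
    have hsub : Set.Ici M ⊆ {x : ℝ | M ≤ |x|} := by
      intro x hx
      have : (0:ℝ) ≤ x := le_trans (by linarith) hx
      simpa [abs_of_nonneg this] using hx
    refine lt_of_lt_of_le ?_ (measure_mono hsub)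
    rcases eq_or_ne (μ₁ (Set.Ici M)) 0 with h0 | h0
    · exfalso
      have := gaussianReal_absolutelyContinuous' 0 hv₁ h0
      simp [Real.volume_Ici] at this
    · exact h0.bot_lt
  -- conclude via the symmetrized strict inequality
  have key : ∫ x, (g x + g (-x)) ∂μ₁ < ∫ x, (g (c * x) + g (-(c * x))) ∂μ₁ := by
    have hi1 : Integrable (fun x => g x + g (-x)) μ₁ := by
      have ha := hIg 1
      have hb := hIg (-1)
      simp only [one_mul, neg_one_mul] at ha hb
      exact ha.add hb
    have hi2 : Integrable (fun x => g (c * x) + g (-(c * x))) μ₁ := by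
      have ha := hIg c
      have hb := hIg (-c)
      simp only [neg_mul] at hb
      exact ha.add hb
    exact aux_strict hi1 hi2 hle (fun x hx => hlt x hx) hSpos
  have e1 : ∫ x, (g x + g (-x)) ∂μ₁ = 2 * ∫ x, g x ∂μ₁ := by
    have ha := hIg 1
    have hb := hIg (-1)
    simp only [one_mul, neg_one_mul] at ha hb
    rw [integral_add ha hb, hinv g hgcont]
    ring
  have e2 : ∫ x, (g (c * x) + g (-(c * x))) ∂μ₁ = 2 * ∫ x, g (c * x) ∂μ₁ := by
    have ha := hIg c
    have hb := hIg (-c)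
    simp only [neg_mul] at hb
    rw [integral_add ha hb]
    have : ∫ x, g (-(c * x)) ∂μ₁ = ∫ x, g (c * x) ∂μ₁ := by
      have := hinv (fun t => g (c * t)) (hgcont.comp (continuous_const.mul continuous_id))
      simpa only [mul_neg] using this
    rw [this]; ring
  rw [e1, e2] at key
  linarith
end

section
/- For a fixed real number y with |y| ≤ M such that y appears as threshold, the minimum of ∫_y^M F(x) dx over all distribution functions F of mean-zero random variables supported on [−M, M] equals (M−y)/2, attained by the distribution putting mass 1/2 at each of ±M. -/
open MeasureTheory ENNReal

namespace Stmt5Aux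

lemma meas_Iic (μ : Measure ℝ) : Measurable (fun x => μ (Set.Iic x)) :=
  Monotone.measurable (fun _ _ hab => measure_mono (Set.Iic_subset_Iic.2 hab))

lemma F_mono (μ : Measure ℝ) [IsFiniteMeasure μ] :
    Monotone (fun x => (μ (Set.Iic x)).toReal) := fun _ _ hab =>
  ENNReal.toReal_mono (measure_ne_top μ _) (measure_mono (Set.Iic_subset_Iic.2 hab))

lemma integrable_id (M : ℝ) (μ : Measure ℝ) [IsProbabilityMeasure μ]
    (hsupp : μ (Set.Icc (-M) M)ᶜ = 0) : Integrable (fun x : ℝ => x) μ := by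
  have hae : ∀ᵐ x ∂μ, x ∈ Set.Icc (-M) M := by
    rw [ae_iff]
    convert hsupp using 2
    rfl
  refine Integrable.mono' (integrable_const M) measurable_id.aestronglyMeasurable ?_
  filter_upwards [hae] with x hx
  rw [Real.norm_eq_abs, abs_le]
  exact ⟨hx.1, hx.2⟩

/-- Key: the CDF integrates to `M` over `[-M, M]` when the mean is zero. -/
lemma key_integral (M : ℝ) (hM : 0 < M) (μ : Measure ℝ) [IsProbabilityMeasure μ]
    (hsupp : μ (Set.Icc (-M) M)ᶜ = 0) (hmean : (∫ x, x ∂μ) = 0) :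
    ∫ x in Set.Ioc (-M) M, (μ (Set.Iic x)).toReal = M := by
  have hae : ∀ᵐ t ∂μ, t ∈ Set.Icc (-M) M := by
    rw [ae_iff]; convert hsupp using 2; rfl
  have h0 : ∫ x in Set.Ioc (-M) M, (μ (Set.Iic x)).toReal
      = (∫⁻ x in Set.Ioc (-M) M, μ (Set.Iic x)).toReal :=
    integral_toReal ((meas_Iic μ).aemeasurable) (Filter.Eventually.of_forall fun _ => measure_lt_top _ _)
  have hswap : (∫⁻ x in Set.Ioc (-M) M, μ (Set.Iic x))
      = ∫⁻ t, (volume.restrict (Set.Ioc (-M) M)) (Set.Ici t) ∂μ := by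
    have h1 : ∀ x : ℝ, μ (Set.Iic x) = ∫⁻ t, (if t ≤ x then (1 : ℝ≥0∞) else 0) ∂μ := by
      intro x
      rw [show (fun t => if t ≤ x then (1 : ℝ≥0∞) else 0)
            = Set.indicator (Set.Iic x) (fun _ => 1) from by
          ext t; simp [Set.indicator_apply, Set.mem_Iic],
        lintegral_indicator measurableSet_Iic]
      simp
    have h2 : ∀ t : ℝ, (volume.restrict (Set.Ioc (-M) M)) (Set.Ici t)
        = ∫⁻ x in Set.Ioc (-M) M, (if t ≤ x then (1 : ℝ≥0∞) else 0) := by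
      intro t
      rw [show (fun x => if t ≤ x then (1 : ℝ≥0∞) else 0)
            = Set.indicator (Set.Ici t) (fun _ => 1) from by
          ext x; simp [Set.indicator_apply, Set.mem_Ici],
        lintegral_indicator measurableSet_Ici]
      simp [Measure.restrict_restrict, Set.inter_comm]
    simp_rw [h1, h2]
    refine lintegral_lintegral_swap ?_
    have hm : Measurable fun p : ℝ × ℝ => if p.2 ≤ p.1 then (1 : ℝ≥0∞) else 0 :=
      Measurable.ite (measurableSet_le measurable_snd measurable_fst)
        measurable_const measurable_const
    exact (hm : Measurable (Function.uncurry fun x t : ℝ => if t ≤ x then (1 : ℝ≥0∞) else 0)).aemeasurable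
  have hvol : ∀ t ∈ Set.Icc (-M) M,
      (volume.restrict (Set.Ioc (-M) M)) (Set.Ici t) = ENNReal.ofReal (M - t) := by
    intro t ht
    rw [Measure.restrict_apply measurableSet_Ici]
    refine le_antisymm ?_ ?_
    · calc volume (Set.Ici t ∩ Set.Ioc (-M) M) ≤ volume (Set.Icc t M) := by
            refine measure_mono fun x hx => ⟨hx.1, hx.2.2⟩
      _ = ENNReal.ofReal (M - t) := by rw [Real.volume_Icc]
    · calc ENNReal.ofReal (M - t) = volume (Set.Ioc t M) := (Real.volume_Ioc).symm
      _ ≤ volume (Set.Ici t ∩ Set.Ioc (-M) M) := by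
            refine measure_mono fun x hx => ⟨le_of_lt hx.1, lt_of_le_of_lt ht.1 hx.1, hx.2⟩
  have hcongr : (∫⁻ t, (volume.restrict (Set.Ioc (-M) M)) (Set.Ici t) ∂μ)
      = ∫⁻ t, ENNReal.ofReal (M - t) ∂μ := by
    refine lintegral_congr_ae ?_
    filter_upwards [hae] with t ht
    exact hvol t ht
  have hintid : Integrable (fun x : ℝ => x) μ := integrable_id M μ hsupp
  have hint : Integrable (fun t : ℝ => M - t) μ := (integrable_const M).sub hintid
  have hlast : (∫⁻ t, ENNReal.ofReal (M - t) ∂μ) = ENNReal.ofReal M := by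
    rw [← ofReal_integral_eq_lintegral_ofReal hint ?_]
    · congr 1
      rw [integral_sub (integrable_const M) hintid, hmean, integral_const]
      simp
    · filter_upwards [hae] with t ht
      simp only [Pi.zero_apply]
      linarith [ht.2]
  rw [h0, hswap, hcongr, hlast, ENNReal.toReal_ofReal hM.le]

lemma lower_bound (M y : ℝ) (hM : 0 < M) (hy : y ∈ Set.Icc (-M) M)
    (μ : Measure ℝ) [IsProbabilityMeasure μ]
    (hsupp : μ (Set.Icc (-M) M)ᶜ = 0) (hmean : (∫ x, x ∂μ) = 0) :
    (M - y) / 2 ≤ ∫ x in y..M, (μ (Set.Iic x)).toReal := by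
  set F : ℝ → ℝ := fun x => (μ (Set.Iic x)).toReal with hF
  have hmono : Monotone F := F_mono μ
  have hFint : ∀ a b : ℝ, IntervalIntegrable F volume a b := fun a b =>
    (hmono.monotoneOn _).intervalIntegrable
  have hyM : y ≤ M := hy.2
  have hMy : -M ≤ y := hy.1
  set t₀ : ℝ := F y with ht₀
  have ht₀0 : 0 ≤ t₀ := ENNReal.toReal_nonneg
  have ht₀1 : t₀ ≤ 1 := by
    have := prob_le_one (μ := μ) (s := Set.Iic y)
    simpa [ht₀, hF] using ENNReal.toReal_mono one_ne_top this
  have h3 : ∫ x in (-M)..M, F x = M := by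
    rw [intervalIntegral.integral_of_le (by linarith)]
    exact key_integral M hM μ hsupp hmean
  have hsplit : (∫ x in (-M)..y, F x) + ∫ x in y..M, F x = ∫ x in (-M)..M, F x :=
    intervalIntegral.integral_add_adjacent_intervals (hFint _ _) (hFint _ _)
  have h1 : (M - y) * t₀ ≤ ∫ x in y..M, F x := by
    have : ∫ x in y..M, (t₀ : ℝ) ≤ ∫ x in y..M, F x := by
      refine intervalIntegral.integral_mono_on hyM (intervalIntegrable_const) (hFint _ _) ?_
      intro x hx; exact hmono hx.1
    simpa [mul_comm] using this
  have h2 : ∫ x in (-M)..y, F x ≤ (y + M) * t₀ := by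
    have : ∫ x in (-M)..y, F x ≤ ∫ x in (-M)..y, (t₀ : ℝ) := by
      refine intervalIntegral.integral_mono_on hMy (hFint _ _) intervalIntegrable_const ?_
      intro x hx; exact hmono hx.2
    simpa [mul_comm, sub_neg_eq_add, add_comm] using this
  have h4 : M - (y + M) * t₀ ≤ ∫ x in y..M, F x := by linarith
  rcases le_total t₀ (1 / 2) with h | h
  · nlinarith
  · nlinarith

end Stmt5Aux

open Stmt5Aux in
/-- The minimum of `∫_y^M F(x) dx` over CDFs `F` of mean-zero random variables
supported on `[-M,M]` equals `(M-y)/2`, attained by the two-point distribution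
putting mass `1/2` at each of `±M`. -/
theorem stmt5 (M y : ℝ) (hM : 0 < M) (hy : y ∈ Set.Icc (-M) M) :
    IsLeast
      { I : ℝ | ∃ μ : Measure ℝ, IsProbabilityMeasure μ ∧
          μ (Set.Icc (-M) M)ᶜ = 0 ∧ (∫ x, x ∂μ) = 0 ∧
          I = ∫ x in y..M, (μ (Set.Iic x)).toReal }
      ((M - y) / 2) ∧
    (∫ x in y..M,
        (((2 : ℝ≥0∞)⁻¹ • Measure.dirac (-M) + (2 : ℝ≥0∞)⁻¹ • Measure.dirac M)
          (Set.Iic x)).toReal) = (M - y) / 2 := by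
  set ν : Measure ℝ := (2 : ℝ≥0∞)⁻¹ • Measure.dirac (-M) + (2 : ℝ≥0∞)⁻¹ • Measure.dirac M with hν
  have hprob : IsProbabilityMeasure ν := by
    constructor
    simp [hν, ENNReal.inv_two_add_inv_two]
  have hsupp : ν (Set.Icc (-M) M)ᶜ = 0 := by
    have h1 : (-M : ℝ) ∈ Set.Icc (-M) M := ⟨le_refl _, by linarith⟩
    have h2 : (M : ℝ) ∈ Set.Icc (-M) M := ⟨by linarith, le_refl _⟩
    simp [hν, Measure.dirac_apply' _ measurableSet_Icc.compl, Set.indicator_apply, h1, h2]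
  have hid_dirac : ∀ a : ℝ, Integrable (fun x : ℝ => x) (Measure.dirac a) := by
    intro a
    refine ⟨measurable_id.aestronglyMeasurable, ?_⟩
    simp [HasFiniteIntegral, lintegral_dirac]
  have hmean : (∫ x, x ∂ν) = 0 := by
    rw [hν, integral_add_measure ((hid_dirac (-M)).smul_measure (by simp))
      ((hid_dirac M).smul_measure (by simp)),
      integral_smul_measure, integral_smul_measure, integral_dirac, integral_dirac]
    simp [ENNReal.toReal_inv]
  have hval : (∫ x in y..M, (ν (Set.Iic x)).toReal) = (M - y) / 2 := by
    rw [intervalIntegral.integral_of_le hy.2]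
    have hcongr : ∫ x in Set.Ioc y M, (ν (Set.Iic x)).toReal
        = ∫ x in Set.Ioc y M, (1 / 2 : ℝ) := by
      refine setIntegral_congr_ae measurableSet_Ioc ?_
      have hne : ∀ᵐ x : ℝ, x ≠ M := by
        rw [ae_iff]
        simpa using Real.volume_singleton (a := M)
      filter_upwards [hne] with x hxne hx
      have hxlt : x < M := lt_of_le_of_ne hx.2 hxne
      have h1 : (-M : ℝ) ∈ Set.Iic x := by
        simp only [Set.mem_Iic]
        linarith [hy.1, hx.1]
      have h2 : (M : ℝ) ∉ Set.Iic x := by simpa using hxlt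
      simp [hν, Measure.dirac_apply' _ measurableSet_Iic, Set.indicator_apply, h1, h2,
        ENNReal.toReal_inv]
    rw [hcongr, setIntegral_const, Real.volume_real_Ioc_of_le hy.2, smul_eq_mul]
    ring
  refine ⟨⟨⟨ν, hprob, hsupp, hmean, hval.symm⟩, ?_⟩, hval⟩
  rintro I ⟨μ, hp, hs, hm, rfl⟩
  exact lower_bound M y hM hy μ hs hm
end

section
/- Define f(u) = u(u−1)·p̄/(1−ub) for 1 ≤ u < 1/b, where 0 < p̄ ≤ b < 1. Let g(x) = sup_{1 ≤ u < 1/b} (xu − f(u)). Then for x ≥ p̄/(1−b), g(x) ≥ (1/b²)(√((1−b)p̄) − √(bx+p̄))², and consequently the (generalized) inverse satisfies g⁻¹(x) ≤ bx + 2√((1−b)p̄·x) for all x ≥ 0. -/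
set_option maxHeartbeats 1000000


/-- For `f(u) = u(u-1)·p̄/(1-ub)` on `[1, 1/b)` and
`g(x) = sup_{1 ≤ u < 1/b} (xu - f(u))`:
for `x ≥ p̄/(1-b)` one has `g(x) ≥ (1/b²)(√((1-b)p̄) - √(bx+p̄))²`, and
consequently `g⁻¹(x) ≤ bx + 2√((1-b)p̄x)` for all `x ≥ 0` (expressed as
`g(bx + 2√((1-b)p̄x)) ≥ x`). -/
theorem stmt8 (b p : ℝ) (hp : 0 < p) (hpb : p ≤ b) (hb : b < 1)
    (g : ℝ → ℝ)
    (hg : ∀ x, g x =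
      sSup ((fun u => x * u - u * (u - 1) * p / (1 - u * b)) '' Set.Ico 1 (1 / b))) :
    (∀ x : ℝ, p / (1 - b) ≤ x →
      (1 / b ^ 2) * (Real.sqrt ((1 - b) * p) - Real.sqrt (b * x + p)) ^ 2 ≤ g x) ∧
    (∀ x : ℝ, 0 ≤ x → x ≤ g (b * x + 2 * Real.sqrt ((1 - b) * p * x))) := by
  have hb0 : 0 < b := lt_of_lt_of_le hp hpb
  have h1b : 0 < 1 - b := by linarith
  -- boundedness of the set defining g
  have hbdd : ∀ y : ℝ, 0 ≤ y →
      BddAbove ((fun u => y * u - u * (u - 1) * p / (1 - u * b)) '' Set.Ico 1 (1 / b)) := by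
    intro y hy
    refine ⟨y / b, ?_⟩
    rintro _ ⟨u, ⟨hu1, hu2⟩, rfl⟩
    have hub : u * b < 1 := by
      have := (lt_div_iff₀ hb0).mp hu2
      linarith
    have hf : 0 ≤ u * (u - 1) * p / (1 - u * b) := by
      apply div_nonneg
      · have : 0 ≤ u - 1 := by linarith
        positivity
      · linarith
    have hyu : y * u ≤ y / b := by
      rw [le_div_iff₀ hb0]
      nlinarith
    simp only
    linarith
  -- key lower bound
  have key : ∀ x : ℝ, p / (1 - b) ≤ x →
      (1 / b ^ 2) * (Real.sqrt ((1 - b) * p) - Real.sqrt (b * x + p)) ^ 2 ≤ g x := by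
    intro x hx
    have hx0 : 0 < x := lt_of_lt_of_le (div_pos hp h1b) hx
    set A := Real.sqrt ((1 - b) * p) with hA_def
    set B := Real.sqrt (b * x + p) with hB_def
    have hA2 : A ^ 2 = (1 - b) * p := Real.sq_sqrt (by positivity)
    have hB2 : B ^ 2 = b * x + p := Real.sq_sqrt (by positivity)
    have hA : 0 < A := Real.sqrt_pos.mpr (by positivity)
    have hB : 0 < B := Real.sqrt_pos.mpr (by positivity)
    have hpx : p ≤ (1 - b) * x := by
      have := (div_le_iff₀ h1b).mp hx; linarith
    have hAB : A ≤ (1 - b) * B := by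
      have hB2' : ((1 - b) * B) ^ 2 = (1 - b) ^ 2 * (b * x + p) := by
        rw [mul_pow, hB2]
      have h1 : (1 - b) * p ≤ ((1 - b) * B) ^ 2 := by
        rw [hB2']
        nlinarith [mul_nonneg (mul_nonneg hb0.le h1b.le) (sub_nonneg.mpr hpx)]
      have h2 := Real.sqrt_le_sqrt h1
      rwa [Real.sqrt_sq (by positivity)] at h2
    set u := (B - A) / (b * B) with hu_def
    have hu1 : 1 ≤ u := by
      rw [le_div_iff₀ (by positivity)]
      nlinarith
    have hu2 : u < 1 / b := by
      rw [div_lt_div_iff₀ (by positivity) hb0]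
      nlinarith
    have h1ub : 1 - u * b = A / B := by
      rw [hu_def]
      field_simp
      ring
    have hval : x * u - u * (u - 1) * p / (1 - u * b) =
        (1 / b ^ 2) * (A - B) ^ 2 := by
      rw [h1ub, hu_def]
      have hx' : x = (B ^ 2 - p) / b := by
        rw [eq_div_iff hb0.ne']; linarith
      have hp' : p = A ^ 2 / (1 - b) := by
        rw [eq_div_iff h1b.ne']; linarith
      rw [hx', hp']
      field_simp
      ring
    rw [hg x]
    calc (1 / b ^ 2) * (A - B) ^ 2
        = x * u - u * (u - 1) * p / (1 - u * b) := hval.symm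
      _ ≤ _ := le_csSup (hbdd x hx0.le) ⟨u, ⟨hu1, hu2⟩, rfl⟩
  refine ⟨key, ?_⟩
  intro x hx
  set A := Real.sqrt ((1 - b) * p) with hA_def
  have hA2 : A ^ 2 = (1 - b) * p := Real.sq_sqrt (by positivity)
  have hA : 0 < A := Real.sqrt_pos.mpr (by positivity)
  set s := Real.sqrt x with hs_def
  have hs2 : s ^ 2 = x := Real.sq_sqrt hx
  have hs : 0 ≤ s := Real.sqrt_nonneg x
  have hsqrt : Real.sqrt ((1 - b) * p * x) = A * s := by
    rw [hA_def, hs_def, ← Real.sqrt_mul (by positivity)]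
  set y := b * x + 2 * Real.sqrt ((1 - b) * p * x) with hy_def
  have hy_eq : y = b * s ^ 2 + 2 * (A * s) := by rw [hy_def, hsqrt, hs2]
  have hy0 : 0 ≤ y := by rw [hy_eq]; positivity
  by_cases hcase : p / (1 - b) ≤ y
  · have h := key y hcase
    set B := Real.sqrt (b * y + p) with hB_def
    have hB2 : B ^ 2 = b * y + p := Real.sq_sqrt (by positivity)
    have hB : 0 ≤ B := Real.sqrt_nonneg _
    have hBlow : b * s + A ≤ B := by
      have h1 : (b * s + A) ^ 2 ≤ B ^ 2 := by
        rw [hB2, hy_eq]; nlinarith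
      nlinarith
    have : x ≤ (1 / b ^ 2) * (A - B) ^ 2 := by
      have hd : b * s ≤ B - A := by linarith
      have h2 : (b * s) ^ 2 ≤ (B - A) ^ 2 := pow_le_pow_left₀ (by positivity) hd 2
      have h3 : (A - B) ^ 2 = (B - A) ^ 2 := by ring
      rw [h3, ← hs2]
      have h4 : s ^ 2 = 1 / b ^ 2 * (b * s) ^ 2 := by
        field_simp
      have h5 : 1 / b ^ 2 * (b * s) ^ 2 ≤ 1 / b ^ 2 * (B - A) ^ 2 :=
        mul_le_mul_of_nonneg_left h2 (by positivity)
      linarith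
    linarith
  · push_neg at hcase
    have hgy : y ≤ g y := by
      rw [hg y]
      refine le_csSup (hbdd y hy0) ⟨1, ⟨le_refl 1, one_lt_one_div hb0 hb⟩, ?_⟩
      norm_num
    have hxy : x ≤ y := by
      rw [hy_eq] at hcase ⊢
      rw [← hs2]
      by_contra hcon
      push_neg at hcon
      have hple : (b * s ^ 2 + 2 * (A * s)) * (1 - b) < p := (lt_div_iff₀ h1b).mp hcase
      have hJ : b * (1 - b) ^ 2 * s ^ 2 + 2 * (1 - b) ^ 2 * (A * s) < (1 - b) * p := by
        nlinarith [mul_lt_mul_of_pos_left hple h1b]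
      rw [← hA2] at hJ
      have hD : 0 < (1 - b) * s - 2 * A := by
        by_contra hD'
        push_neg at hD'
        nlinarith [mul_nonneg hs (neg_nonneg.mpr hD')]
      nlinarith [hJ, mul_pos hD hD, mul_pos hA hD, sq_nonneg A, hA]
    linarith
end

section
/- Define g(x) = sup_{u ≥ 0} { xu − p̄·u(u+1)/(1+u·p̄) } for 0 ≤ x ≤ 1, where 0 < p̄ < 1. Then g(x) = (1/p̄)(√(1−x) − √(1−p̄))² for p̄ ≤ x ≤ 1, and g(x) = 0 for 0 ≤ x ≤ p̄. Consequently g⁻¹(x) ≤ p̄ − p̄x + 2√(p̄(1−p̄)x) for 0 ≤ x ≤ (1−p̄)/p̄. -/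
lemma stmt9_ident (a b p x u : ℝ) (hxa : x = 1 - a^2) (hpb : p = 1 - b^2)
    (hp0 : p ≠ 0) (ht : 1 + u*p ≠ 0) :
    (1/p)*(a-b)^2 - (x*u - p*u*(u+1)/(1+u*p)) = (a*(1+u*p)-b)^2/(p*(1+u*p)) := by
  rw [eq_div_iff (mul_ne_zero hp0 ht)]
  have e1 : p*u*(u+1)/(1+u*p)*(1+u*p) = p*u*(u+1) := div_mul_cancel₀ _ ht
  have e2 : 1/p*p = 1 := one_div_mul_cancel hp0
  subst hxa hpb
  linear_combination (a-b)^2*(1+u*(1-b^2))*e2 + (1-b^2)*e1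

lemma stmt9_ub (p x u : ℝ) (hp : 0 < p) (hu : 0 ≤ u) (hx1 : x ≤ 1)
    (hp1 : p < 1) :
    x*u - p*u*(u+1)/(1+u*p) ≤ (1/p)*(Real.sqrt (1-x) - Real.sqrt (1-p))^2 := by
  have ht : 0 < 1 + u*p := by nlinarith
  have h := stmt9_ident (Real.sqrt (1-x)) (Real.sqrt (1-p)) p x u
    (by rw [Real.sq_sqrt (by linarith)]; ring)
    (by rw [Real.sq_sqrt (by linarith)]; ring)
    hp.ne' ht.ne'
  have h2 : 0 ≤ (Real.sqrt (1-x)*(1+u*p) - Real.sqrt (1-p))^2/(p*(1+u*p)) :=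
    div_nonneg (sq_nonneg _) (by positivity)
  linarith

/-- For `g(x) = sup_{u ≥ 0} (xu - p̄u(u+1)/(1+up̄))`:
`g(x) = (1/p̄)(√(1-x) - √(1-p̄))²` for `p̄ ≤ x ≤ 1`, `g(x) = 0` for `0 ≤ x ≤ p̄`,
and `g⁻¹(x) ≤ p̄ - p̄x + 2√(p̄(1-p̄)x)` for `0 ≤ x ≤ (1-p̄)/p̄` (expressed as
`g(p̄ - p̄x + 2√(p̄(1-p̄)x)) ≥ x`). -/
theorem stmt9 (p : ℝ) (hp : 0 < p) (hp1 : p < 1)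
    (g : ℝ → ℝ)
    (hg : ∀ x, g x =
      sSup ((fun u => x * u - p * u * (u + 1) / (1 + u * p)) '' Set.Ici 0)) :
    (∀ x : ℝ, p ≤ x → x ≤ 1 →
      g x = (1 / p) * (Real.sqrt (1 - x) - Real.sqrt (1 - p)) ^ 2) ∧
    (∀ x : ℝ, 0 ≤ x → x ≤ p → g x = 0) ∧
    (∀ x : ℝ, 0 ≤ x → x ≤ (1 - p) / p →
      x ≤ g (p - p * x + 2 * Real.sqrt (p * (1 - p) * x))) := by
  have hb2 : Real.sqrt (1-p)^2 = 1 - p := Real.sq_sqrt (by linarith)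
  have h1 : ∀ x : ℝ, p ≤ x → x ≤ 1 →
      g x = (1 / p) * (Real.sqrt (1 - x) - Real.sqrt (1 - p)) ^ 2 := by
    intro x hpx hx1
    rw [hg]
    rcases eq_or_lt_of_le hx1 with h1x | h1x
    · -- x = 1
      subst h1x
      have hc : (1 / p) * (Real.sqrt (1 - 1) - Real.sqrt (1 - p)) ^ 2 = (1-p)/p := by
        rw [sub_self, Real.sqrt_zero]
        field_simp
        linarith [hb2]
      rw [hc]
      apply csSup_eq_of_forall_le_of_forall_lt_exists_gt
      · exact ⟨_, ⟨0, Set.self_mem_Ici, rfl⟩⟩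
      · rintro y ⟨u, hu, rfl⟩
        have := stmt9_ub p 1 u hp hu le_rfl hp1
        rw [sub_self, Real.sqrt_zero] at this
        calc (1:ℝ) * u - p * u * (u + 1) / (1 + u * p)
            ≤ (1/p) * (0 - Real.sqrt (1-p))^2 := this
          _ = (1-p)/p := by field_simp; linarith [hb2]
      · intro w hw
        rcases lt_or_ge w 0 with hw0 | hw0
        · refine ⟨_, ⟨0, Set.self_mem_Ici, rfl⟩, ?_⟩
          simp only
          norm_num
          linarith
        · set d : ℝ := 1 - p - w*p with hd
          have hd0 : 0 < d := by
            have : w * p < 1 - p := by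
              rw [lt_div_iff₀ hp] at hw; linarith
            linarith
          set u : ℝ := (w+1)/d with hu
          have hu0 : 0 ≤ u := div_nonneg (by linarith) hd0.le
          refine ⟨_, ⟨u, hu0, rfl⟩, ?_⟩
          have ht : 0 < 1 + u*p := by nlinarith
          have hud : u * d = w + 1 := by rw [hu]; exact div_mul_cancel₀ (w+1) hd0.ne'
          have key : p*u*(u+1) < (u - w)*(1+u*p) := by nlinarith [hud]
          have key2 : p*u*(u+1)/(1+u*p) < u - w := (div_lt_iff₀ ht).mpr key
          show w < 1 * u - p * u * (u + 1) / (1 + u * p)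
          linarith
    · -- x < 1
      have ha2 : Real.sqrt (1-x)^2 = 1 - x := Real.sq_sqrt (by linarith)
      have ha0 : 0 < Real.sqrt (1-x) := Real.sqrt_pos.mpr (by linarith)
      have hab : Real.sqrt (1-x) ≤ Real.sqrt (1-p) :=
        Real.sqrt_le_sqrt (by linarith)
      set a := Real.sqrt (1-x)
      set b := Real.sqrt (1-p)
      set u0 : ℝ := (b - a)/(a*p) with hu0def
      have hu0 : 0 ≤ u0 := div_nonneg (by linarith) (by positivity)
      have ht0 : 1 + u0 * p = b / a := by
        rw [hu0def]; field_simp; ring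
      have hfu0 : x * u0 - p * u0 * (u0 + 1) / (1 + u0 * p)
          = (1/p) * (a - b)^2 := by
        have hbpos : 0 < b := Real.sqrt_pos.mpr (by linarith)
        have h := stmt9_ident a b p x u0 (by rw [ha2]; ring) (by rw [hb2]; ring)
          hp.ne' (by rw [ht0]; exact (div_pos hbpos ha0).ne')
        have hz : (a*(1+u0*p)-b)^2 = 0 := by
          rw [ht0, mul_div_cancel₀ _ ha0.ne', sub_self]
          ring
        rw [hz, zero_div] at h
        linarith
      apply IsGreatest.csSup_eq
      constructor
      · exact ⟨u0, hu0, hfu0⟩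
      · rintro y ⟨u, hu, rfl⟩
        exact stmt9_ub p x u hp hu hx1 hp1
  refine ⟨h1, ?_, ?_⟩
  · -- 0 ≤ x ≤ p : g x = 0
    intro x hx0 hxp
    rw [hg]
    apply IsGreatest.csSup_eq
    constructor
    · refine ⟨0, Set.self_mem_Ici, ?_⟩
      simp
    · rintro y ⟨u, hu, rfl⟩
      have hu' : (0:ℝ) ≤ u := hu
      have ht : 0 < 1 + u*p := by nlinarith
      rw [sub_nonpos, le_div_iff₀ ht]
      nlinarith [mul_nonneg hu' (sub_nonneg.mpr hxp),
        mul_nonneg (mul_nonneg hu' hu') (mul_nonneg hp.le (by linarith : (0:ℝ) ≤ 1 - x))]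
  · -- part 3
    intro x hx0 hxle
    have hs2 : Real.sqrt (p*x)^2 = p*x := Real.sq_sqrt (by positivity)
    have hpx : p * x ≤ 1 - p := by
      rw [le_div_iff₀ hp] at hxle; linarith
    have hsb : Real.sqrt (p*x) ≤ Real.sqrt (1-p) := Real.sqrt_le_sqrt (by linarith)
    have hs0 : (0:ℝ) ≤ Real.sqrt (p*x) := Real.sqrt_nonneg _
    have hb0 : (0:ℝ) ≤ Real.sqrt (1-p) := Real.sqrt_nonneg _
    set s := Real.sqrt (p*x)
    set b := Real.sqrt (1-p)
    have hrs : Real.sqrt (p*(1-p)*x) = b*s := by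
      rw [show p*(1-p)*x = (1-p)*(p*x) by ring, Real.sqrt_mul (by linarith)]
    set y : ℝ := p - p*x + 2*Real.sqrt (p*(1-p)*x) with hy
    have hyp : p ≤ y := by
      rw [hy, hrs]
      nlinarith [mul_nonneg hs0 (by linarith : (0:ℝ) ≤ b - s), mul_nonneg hb0 hs0]
    have h1y : 1 - y = (b - s)^2 := by
      rw [hy, hrs]; linear_combination -hb2 - hs2
    have hy1 : y ≤ 1 := by nlinarith [sq_nonneg (b-s)]
    have hsq : Real.sqrt (1-y) = b - s := by
      rw [h1y, Real.sqrt_sq (by linarith)]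
    rw [h1 y hyp hy1, hsq]
    rw [show (b - s - b)^2 = s^2 by ring, hs2]
    rw [show 1/p * (p*x) = x by field_simp]
end

section
/- Let m be a probability measure on [c,∞) with c > 0, σ² := ∫ ξ^{-2} m(dξ), and suppose for each small α > 0 there exists a = a(α) ∈ (0,c) solving α = a² ∫ (ξ−a)^{-2} m(dξ). Then a(α) ≤ √α / σ, and moreover α/a(α)² − σ² = O(√α) as α ↓ 0, hence √α/a(α) → σ. -/
open MeasureTheory Filter

lemma key13 (c : ℝ) (hc : 0 < c) (m : Measure ℝ) [IsProbabilityMeasure m]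
    (hae : ∀ᵐ ξ ∂m, c ≤ ξ) (b : ℝ) (hb0 : 0 < b) (hbc : b < c)
    (hint : Integrable (fun ξ => ((ξ - b) ^ 2)⁻¹) m) :
    Integrable (fun ξ => (ξ ^ 2)⁻¹) m ∧
    (∫ ξ, (ξ ^ 2)⁻¹ ∂m) ≤ (∫ ξ, ((ξ - b) ^ 2)⁻¹ ∂m) ∧
    (∫ ξ, ((ξ - b) ^ 2)⁻¹ ∂m) ≤ (∫ ξ, (ξ ^ 2)⁻¹ ∂m) + 2 * b / (c * (c - b) ^ 2) := by
  have hmono : ∀ᵐ ξ ∂m, (ξ ^ 2)⁻¹ ≤ ((ξ - b) ^ 2)⁻¹ := by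
    filter_upwards [hae] with ξ hξ
    have h1 : 0 < ξ - b := by linarith
    apply inv_anti₀ (by positivity)
    nlinarith
  have hintσ : Integrable (fun ξ => (ξ ^ 2)⁻¹) m := by
    apply hint.mono' ((measurable_id.pow_const 2).inv.aestronglyMeasurable)
    filter_upwards [hae, hmono] with ξ hξ h2
    have : (0:ℝ) < ξ := lt_of_lt_of_le hc hξ
    show ‖(ξ ^ 2)⁻¹‖ ≤ _
    rw [Real.norm_eq_abs, abs_of_nonneg (by positivity : (0:ℝ) ≤ (ξ ^ 2)⁻¹)]
    exact h2
  refine ⟨hintσ, integral_mono_ae hintσ hint hmono, ?_⟩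
  have hdiff : ∀ᵐ ξ ∂m, ((ξ - b) ^ 2)⁻¹ ≤ (ξ ^ 2)⁻¹ + 2 * b / (c * (c - b) ^ 2) := by
    filter_upwards [hae] with ξ hξ
    have hx : 0 < ξ := lt_of_lt_of_le hc hξ
    have h1 : 0 < ξ - b := by linarith
    have h3 : 0 < c - b := by linarith
    have heq : ((ξ - b) ^ 2)⁻¹ - (ξ ^ 2)⁻¹ = (ξ ^ 2 - (ξ - b) ^ 2) / ((ξ - b) ^ 2 * ξ ^ 2) := by
      field_simp
    have hle : (ξ ^ 2 - (ξ - b) ^ 2) / ((ξ - b) ^ 2 * ξ ^ 2)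
        ≤ (2 * b * ξ) / (c * (c - b) ^ 2 * ξ) := by
      have h4 : (c - b) ^ 2 ≤ (ξ - b) ^ 2 := by nlinarith
      have h5 : c * ξ ≤ ξ ^ 2 := by nlinarith
      apply div_le_div₀ (by positivity) (by nlinarith) (by positivity)
      nlinarith [mul_le_mul h4 h5 (by positivity) (by positivity)]
    have heq2 : (2 * b * ξ) / (c * (c - b) ^ 2 * ξ) = 2 * b / (c * (c - b) ^ 2) := by
      field_simp
    linarith [heq ▸ (heq2 ▸ hle)]
  calc (∫ ξ, ((ξ - b) ^ 2)⁻¹ ∂m)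
      ≤ ∫ ξ, ((ξ ^ 2)⁻¹ + 2 * b / (c * (c - b) ^ 2)) ∂m :=
        integral_mono_ae hint (hintσ.add (integrable_const _)) hdiff
    _ = (∫ ξ, (ξ ^ 2)⁻¹ ∂m) + 2 * b / (c * (c - b) ^ 2) := by
        rw [integral_add hintσ (integrable_const _), integral_const]
        simp

/-- If `a(α) ∈ (0,c)` solves `α = a² ∫ (ξ-a)⁻² m(dξ)` for a probability measure
`m` on `[c,∞)` and `σ² = ∫ ξ⁻² m(dξ)`, then `a(α) ≤ √α/σ`,
`α/a(α)² - σ² = O(√α)` as `α ↓ 0`, and `√α/a(α) → σ`. -/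
theorem stmt13 (c : ℝ) (hc : 0 < c) (m : Measure ℝ) [IsProbabilityMeasure m]
    (hsupp : m (Set.Iio c) = 0)
    (σsq : ℝ) (hσ : σsq = ∫ ξ, (ξ ^ 2)⁻¹ ∂m) (hσpos : 0 < σsq)
    (α₀ : ℝ) (hα₀ : 0 < α₀) (a : ℝ → ℝ)
    (ha : ∀ α ∈ Set.Ioo 0 α₀,
      a α ∈ Set.Ioo 0 c ∧
      Integrable (fun ξ => ((ξ - a α) ^ 2)⁻¹) m ∧
      α = (a α) ^ 2 * ∫ ξ, ((ξ - a α) ^ 2)⁻¹ ∂m) :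
    (∀ α ∈ Set.Ioo 0 α₀, a α ≤ Real.sqrt α / Real.sqrt σsq) ∧
    (∃ C > 0, ∃ δ > 0, ∀ α ∈ Set.Ioo 0 (min δ α₀),
      0 ≤ α / (a α) ^ 2 - σsq ∧ α / (a α) ^ 2 - σsq ≤ C * Real.sqrt α) ∧
    Tendsto (fun α => Real.sqrt α / a α) (nhdsWithin 0 (Set.Ioi 0))
      (nhds (Real.sqrt σsq)) := by
  have hae : ∀ᵐ ξ ∂m, c ≤ ξ := by
    rw [ae_iff]
    simpa [not_le, Set.Iio] using hsupp
  -- basic facts for each α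
  have hbasic : ∀ α ∈ Set.Ioo 0 α₀,
      0 < a α ∧ a α < c ∧ α / (a α) ^ 2 = ∫ ξ, ((ξ - a α) ^ 2)⁻¹ ∂m ∧
      σsq ≤ α / (a α) ^ 2 ∧
      α / (a α) ^ 2 ≤ σsq + 2 * (a α) / (c * (c - a α) ^ 2) := by
    intro α hα
    obtain ⟨⟨h0, h1⟩, hint, heq⟩ := ha α hα
    obtain ⟨_, hl, hu⟩ := key13 c hc m hae (a α) h0 h1 hint
    set b := a α with hb
    have ha2 : b ^ 2 ≠ 0 := by positivity
    have key : α / b ^ 2 = ∫ ξ, ((ξ - b) ^ 2)⁻¹ ∂m := by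
      rw [div_eq_iff ha2, heq]; ring
    exact ⟨h0, h1, key, by rw [key, hσ]; exact hl, by rw [key, hσ]; exact hu⟩
  have part1 : ∀ α ∈ Set.Ioo 0 α₀, a α ≤ Real.sqrt α / Real.sqrt σsq := by
    intro α hα
    obtain ⟨h0, h1, _, hl, _⟩ := hbasic α hα
    have hsq : (a α) ^ 2 ≤ α / σsq := by
      rw [le_div_iff₀ hσpos]
      have h2 : 0 < (a α) ^ 2 := by positivity
      calc (a α) ^ 2 * σsq ≤ (a α) ^ 2 * (α / (a α) ^ 2) := by
            exact mul_le_mul_of_nonneg_left hl h2.le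
        _ = α := by field_simp
    calc a α = Real.sqrt ((a α) ^ 2) := (Real.sqrt_sq h0.le).symm
      _ ≤ Real.sqrt (α / σsq) := Real.sqrt_le_sqrt hsq
      _ = Real.sqrt α / Real.sqrt σsq := Real.sqrt_div hα.1.le _
  set C : ℝ := 8 / (c ^ 3 * Real.sqrt σsq) with hC
  set δ : ℝ := σsq * c ^ 2 / 4 with hδ
  have hCpos : 0 < C := by
    have := Real.sqrt_pos.mpr hσpos
    positivity
  have hδpos : 0 < δ := by positivity
  have part2 : ∀ α ∈ Set.Ioo 0 (min δ α₀),
      0 ≤ α / (a α) ^ 2 - σsq ∧ α / (a α) ^ 2 - σsq ≤ C * Real.sqrt α := by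
    intro α hα
    have hα' : α ∈ Set.Ioo 0 α₀ := ⟨hα.1, lt_of_lt_of_le hα.2 (min_le_right _ _)⟩
    obtain ⟨h0, h1, _, hl, hu⟩ := hbasic α hα'
    refine ⟨by linarith, ?_⟩
    have hsσ : 0 < Real.sqrt σsq := Real.sqrt_pos.mpr hσpos
    -- a α ≤ c / 2
    have haδ : a α ≤ c / 2 := by
      have h2 : a α ≤ Real.sqrt α / Real.sqrt σsq := part1 α hα'
      have h3 : Real.sqrt α ≤ Real.sqrt δ :=
        Real.sqrt_le_sqrt (le_of_lt (lt_of_lt_of_le hα.2 (min_le_left _ _)))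
      have h4 : Real.sqrt δ = Real.sqrt σsq * (c / 2) := by
        rw [hδ]
        rw [show σsq * c ^ 2 / 4 = (Real.sqrt σsq * (c / 2)) ^ 2 by
          rw [mul_pow, Real.sq_sqrt hσpos.le]; ring]
        exact Real.sqrt_sq (by positivity)
      calc a α ≤ Real.sqrt α / Real.sqrt σsq := h2
        _ ≤ Real.sqrt δ / Real.sqrt σsq := by gcongr
        _ = c / 2 := by rw [h4]; field_simp
    have hcb : c / 2 ≤ c - a α := by linarith
    have hbound : 2 * (a α) / (c * (c - a α) ^ 2) ≤ C * Real.sqrt α := by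
      have hstep : 2 * (a α) / (c * (c - a α) ^ 2) ≤ 8 * (a α) / c ^ 3 := by
        rw [div_le_div_iff₀ (mul_pos hc (by nlinarith : (0:ℝ) < (c - a α) ^ 2)) (by positivity)]
        have hq : (c / 2) ^ 2 ≤ (c - a α) ^ 2 := by nlinarith
        nlinarith [mul_le_mul_of_nonneg_left hq (show (0:ℝ) ≤ 8 * a α * c by positivity)]
      have hstep2 : 8 * (a α) / c ^ 3 ≤ C * Real.sqrt α := by
        rw [hC]
        have := part1 α hα'
        rw [div_mul_eq_mul_div, div_le_div_iff₀ (by positivity) (by positivity)]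
        calc 8 * a α * (c ^ 3 * Real.sqrt σsq) = (a α * Real.sqrt σsq) * (8 * c ^ 3) := by ring
          _ ≤ Real.sqrt α * (8 * c ^ 3) := by
              apply mul_le_mul_of_nonneg_right _ (by positivity)
              calc a α * Real.sqrt σsq ≤ (Real.sqrt α / Real.sqrt σsq) * Real.sqrt σsq :=
                    mul_le_mul_of_nonneg_right this hsσ.le
                _ = Real.sqrt α := by field_simp
          _ = 8 * Real.sqrt α * c ^ 3 := by ring
      linarith
    linarith
  refine ⟨part1, ⟨C, hCpos, δ, hδpos, part2⟩, ?_⟩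
  -- squeeze
  have hupper : Tendsto (fun α => Real.sqrt (σsq + C * Real.sqrt α))
      (nhdsWithin 0 (Set.Ioi 0)) (nhds (Real.sqrt σsq)) := by
    have hcont : Continuous (fun α : ℝ => Real.sqrt (σsq + C * Real.sqrt α)) :=
      Real.continuous_sqrt.comp (continuous_const.add (continuous_const.mul Real.continuous_sqrt))
    have := hcont.tendsto 0
    simp only [Real.sqrt_zero, mul_zero, add_zero] at this
    exact this.mono_left nhdsWithin_le_nhds
  have hmem : Set.Ioo (0:ℝ) (min δ α₀) ∈ nhdsWithin (0:ℝ) (Set.Ioi 0) :=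
    Ioo_mem_nhdsGT_of_mem ⟨le_refl 0, lt_min hδpos hα₀⟩
  apply tendsto_of_tendsto_of_tendsto_of_le_of_le' tendsto_const_nhds hupper
  · filter_upwards [hmem] with α hα
    have hα' : α ∈ Set.Ioo 0 α₀ := ⟨hα.1, lt_of_lt_of_le hα.2 (min_le_right _ _)⟩
    obtain ⟨h0, h1, _, hl, _⟩ := hbasic α hα'
    calc Real.sqrt σsq ≤ Real.sqrt (α / (a α) ^ 2) := Real.sqrt_le_sqrt hl
      _ = Real.sqrt α / a α := by
          rw [Real.sqrt_div hα.1.le, Real.sqrt_sq h0.le]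
  · filter_upwards [hmem] with α hα
    have hα' : α ∈ Set.Ioo 0 α₀ := ⟨hα.1, lt_of_lt_of_le hα.2 (min_le_right _ _)⟩
    obtain ⟨h0, h1, _, hl, _⟩ := hbasic α hα'
    obtain ⟨_, h2⟩ := part2 α hα
    calc Real.sqrt α / a α = Real.sqrt (α / (a α) ^ 2) := by
          rw [Real.sqrt_div hα.1.le, Real.sqrt_sq h0.le]
      _ ≤ Real.sqrt (σsq + C * Real.sqrt α) := Real.sqrt_le_sqrt (by linarith)
end
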